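/- Let γ ∈ (0,1), K a bounded γ-Hölder probability density, F C¹ with bounded Lipschitz derivative, and φ(f) := f·F(K*f). Then φ maps C^γ ∩ L¹(ℝ^d) into itself and there is a constant C (depending on F, K, γ, d) with ‖φ(f)‖_{C^γ} ≤ C ‖f‖_{C^γ} (1 + ‖f‖_{L¹}) for all f ∈ C^γ ∩ L¹. -/

import Mathlib

open MeasureTheory Real Filter Topology

abbrev Euc (d : ℕ) := EuclideanSpace ℝ (Fin d)

noncomputable def supN {E : Type*} (f : E → ℝ) : ℝ := ⨆ x, |f x|

noncomputable def holdS {E : Type*} [NormedAddCommGroup E] (γ : ℝ) (f : E → ℝ) : ℝ :=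
  ⨆ p : E × E, |f p.1 - f p.2| / ‖p.1 - p.2‖ ^ γ

noncomputable def cNorm {E : Type*} [NormedAddCommGroup E] (γ : ℝ) (f : E → ℝ) : ℝ :=
  supN f + holdS γ f

def IsHolderBdd {E : Type*} [NormedAddCommGroup E] (γ : ℝ) (f : E → ℝ) : Prop :=
  BddAbove (Set.range fun x => |f x|) ∧
  BddAbove (Set.range fun p : E × E => |f p.1 - f p.2| / ‖p.1 - p.2‖ ^ γ)

section Aux

variable {E : Type*} [NormedAddCommGroup E] [Nonempty E]

lemma supN_bound {f : E → ℝ} (h : BddAbove (Set.range fun x => |f x|)) (x : E) :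
    |f x| ≤ supN f :=
  le_ciSup h x

lemma supN_nonneg {f : E → ℝ} (h : BddAbove (Set.range fun x => |f x|)) : 0 ≤ supN f :=
  le_trans (abs_nonneg _) (supN_bound h (Classical.arbitrary E))

lemma holdS_nonneg {γ : ℝ} {f : E → ℝ}
    (h : BddAbove (Set.range fun p : E × E => |f p.1 - f p.2| / ‖p.1 - p.2‖ ^ γ)) :
    0 ≤ holdS γ f := by
  have := le_ciSup h ((Classical.arbitrary E, Classical.arbitrary E) : E × E)
  simpa [holdS] using this

lemma holder_est {γ : ℝ} (hγ : 0 < γ) {f : E → ℝ}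
    (h : BddAbove (Set.range fun p : E × E => |f p.1 - f p.2| / ‖p.1 - p.2‖ ^ γ))
    (x y : E) : |f x - f y| ≤ holdS γ f * ‖x - y‖ ^ γ := by
  rcases eq_or_ne x y with rfl | hxy
  · simp [Real.zero_rpow hγ.ne']
  · have hpos : (0:ℝ) < ‖x - y‖ ^ γ :=
      Real.rpow_pos_of_pos (norm_pos_iff.mpr (sub_ne_zero.mpr hxy)) γ
    have hle := le_ciSup h ((x, y) : E × E)
    exact (div_le_iff₀ hpos).mp hle

end Aux

/-- φ(f) = f·F(K*f) maps C^γ ∩ L¹ into itself with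
‖φ(f)‖_{C^γ} ≤ C‖f‖_{C^γ}(1 + ‖f‖_{L¹}). -/
theorem stmt17 {d : ℕ} (γ : ℝ) (hγ : γ ∈ Set.Ioo (0:ℝ) 1)
    (K : Euc d → ℝ) (hK0 : ∀ x, 0 ≤ K x) (hKint : Integrable K)
    (hK1 : (∫ x, K x) = 1) (hKH : IsHolderBdd γ K)
    (F : ℝ → ℝ) (hF : ContDiff ℝ 1 F) (M : ℝ) (hM : ∀ x, |deriv F x| ≤ M)
    (L : NNReal) (hL : LipschitzWith L (deriv F)) :
    ∃ C > 0, ∀ f : Euc d → ℝ, IsHolderBdd γ f → Integrable f →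
      IsHolderBdd γ (fun x => f x * F (∫ z, K (x - z) * f z)) ∧
      Integrable (fun x => f x * F (∫ z, K (x - z) * f z)) ∧
      cNorm γ (fun x => f x * F (∫ z, K (x - z) * f z)) ≤
        C * cNorm γ f * (1 + ∫ x, |f x|) := by
  obtain ⟨hγ0, hγ1⟩ := hγ
  obtain ⟨hKb, hKh⟩ := hKH
  set SK : ℝ := supN K with hSK
  set HK : ℝ := holdS γ K with hHK
  have hSK0 : 0 ≤ SK := supN_nonneg hKb
  have hHK0 : 0 ≤ HK := holdS_nonneg hKh
  have hM0 : 0 ≤ M := le_trans (abs_nonneg _) (hM 0)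
  -- F is M-Lipschitz
  have hFlip : ∀ a b : ℝ, |F a - F b| ≤ M * |a - b| := by
    intro a b
    have := Convex.norm_image_sub_le_of_norm_deriv_le (f := F) (s := Set.univ)
      (fun x _ => (hF.differentiable one_ne_zero).differentiableAt)
      (fun x _ => hM x) convex_univ (Set.mem_univ b) (Set.mem_univ a)
    simpa [Real.norm_eq_abs] using this
  set C0 : ℝ := |F 0| + M * SK + M * HK with hC0
  have hC00 : 0 ≤ C0 := by positivity
  refine ⟨C0 + 1, by positivity, ?_⟩
  intro f hf hfInt
  obtain ⟨hfb, hfh⟩ := hf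
  set A : ℝ := supN f with hA
  set Hf : ℝ := holdS γ f with hHfdef
  set I : ℝ := ∫ x, |f x| with hI
  have hA0 : 0 ≤ A := supN_nonneg hfb
  have hHf0 : 0 ≤ Hf := holdS_nonneg hfh
  have hI0 : 0 ≤ I := integral_nonneg fun x => abs_nonneg _
  set g : Euc d → ℝ := fun x => ∫ z, K (x - z) * f z with hgdef
  -- measurability of translated kernel
  have hKz : ∀ x : Euc d, AEStronglyMeasurable (fun z => K (x - z)) volume := by
    intro x
    exact hKint.aestronglyMeasurable.comp_measurePreserving
      (Measure.measurePreserving_sub_left volume x)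
  have hKbd : ∀ w : Euc d, |K w| ≤ SK := fun w => supN_bound hKb w
  have hint : ∀ x : Euc d, Integrable (fun z => K (x - z) * f z) := by
    intro x
    exact hfInt.bdd_mul (c := SK) (hKz x) (Eventually.of_forall fun z => by simpa using hKbd (x - z))
  -- pointwise bound on g
  have hgbd : ∀ x, |g x| ≤ SK * I := by
    intro x
    calc |g x| ≤ ∫ z, |K (x - z) * f z| := by
          have := norm_integral_le_integral_norm (μ := volume) (fun z => K (x - z) * f z)
          simpa only [Real.norm_eq_abs] using this
      _ ≤ ∫ z, SK * |f z| := by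
          refine integral_mono (hint x).abs (hfInt.abs.const_mul SK) fun z => ?_
          rw [abs_mul]
          exact mul_le_mul_of_nonneg_right (hKbd _) (abs_nonneg _)
      _ = SK * I := integral_const_mul SK _
  -- Hölder estimate on g
  have hgdiff : ∀ x y, |g x - g y| ≤ HK * I * ‖x - y‖ ^ γ := by
    intro x y
    have hsub : g x - g y = ∫ z, (K (x - z) - K (y - z)) * f z := by
      rw [hgdef]
      rw [← integral_sub (hint x) (hint y)]
      simp [sub_mul]
    have hintsub : Integrable (fun z => (K (x - z) - K (y - z)) * f z) := by
      have := (hint x).sub (hint y)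
      exact this.congr (Eventually.of_forall fun z => by simp [sub_mul])
    rw [hsub]
    calc |∫ z, (K (x - z) - K (y - z)) * f z| ≤ ∫ z, |(K (x - z) - K (y - z)) * f z| := by
          have := norm_integral_le_integral_norm (μ := volume)
            (fun z => (K (x - z) - K (y - z)) * f z)
          simpa only [Real.norm_eq_abs] using this
      _ ≤ ∫ z, HK * ‖x - y‖ ^ γ * |f z| := by
          refine integral_mono hintsub.abs ((hfInt.abs.const_mul _)) fun z => ?_
          rw [abs_mul]
          refine mul_le_mul_of_nonneg_right ?_ (abs_nonneg _)
          have := holder_est hγ0 hKh (x - z) (y - z)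
          simpa [sub_sub_sub_cancel_right] using this
      _ = HK * ‖x - y‖ ^ γ * I := integral_const_mul _ _
      _ = HK * I * ‖x - y‖ ^ γ := by ring
  -- continuity of g
  have hgc : Continuous g := by
    rw [continuous_iff_continuousAt]
    intro x₀
    rw [ContinuousAt, ← tendsto_sub_nhds_zero_iff]
    have h1 : Tendsto (fun x : Euc d => ‖x - x₀‖) (𝓝 x₀) (𝓝 0) := by
      have : Tendsto (fun x : Euc d => x - x₀) (𝓝 x₀) (𝓝 (x₀ - x₀)) :=
        (continuous_id.sub continuous_const).tendsto x₀
      simpa using this.norm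
    have h2 : Tendsto (fun x : Euc d => HK * I * ‖x - x₀‖ ^ γ) (𝓝 x₀) (𝓝 0) := by
      have hrp : ContinuousAt (fun t : ℝ => HK * I * t ^ γ) 0 :=
        ((Real.continuousAt_rpow_const 0 γ (Or.inr hγ0.le)).const_mul (HK * I))
      have := hrp.tendsto.comp h1
      simpa [Real.zero_rpow hγ0.ne', Function.comp_def] using this
    exact squeeze_zero_norm (fun x => by
      simpa [Real.norm_eq_abs] using hgdiff x x₀) h2
  -- bound on F ∘ g
  set B : ℝ := |F 0| + M * (SK * I) with hB
  have hB0 : 0 ≤ B := by positivity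
  have hFg : ∀ x, |F (g x)| ≤ B := by
    intro x
    have h1 : |F (g x) - F 0| ≤ M * |g x| := by simpa using hFlip (g x) 0
    have h2 : |F (g x)| ≤ |F (g x) - F 0| + |F 0| := by
      have := abs_sub_abs_le_abs_sub (F (g x)) (F 0)
      linarith [abs_nonneg (F 0)]
    have := mul_le_mul_of_nonneg_left (hgbd x) hM0
    rw [hB]; linarith
  set φ : Euc d → ℝ := fun x => f x * F (g x) with hφ
  have hfbd : ∀ x, |f x| ≤ A := fun x => supN_bound hfb x
  -- sup bound on φ
  have hφbd : ∀ x, |φ x| ≤ A * B := by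
    intro x
    rw [hφ]
    simp only
    rw [abs_mul]
    exact mul_le_mul (hfbd x) (hFg x) (abs_nonneg _) hA0
  -- Hölder bound on φ
  set H : ℝ := Hf * B + A * (M * (HK * I)) with hHdef
  have hH0 : 0 ≤ H := by positivity
  have hφdiff : ∀ x y, |φ x - φ y| ≤ H * ‖x - y‖ ^ γ := by
    intro x y
    have key : φ x - φ y = (f x - f y) * F (g x) + f y * (F (g x) - F (g y)) := by
      rw [hφ]; ring
    have e1 : |(f x - f y) * F (g x)| ≤ Hf * ‖x - y‖ ^ γ * B := by
      rw [abs_mul]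
      exact mul_le_mul (holder_est hγ0 hfh x y) (hFg x) (abs_nonneg _)
        (by positivity)
    have e2 : |f y * (F (g x) - F (g y))| ≤ A * (M * (HK * I * ‖x - y‖ ^ γ)) := by
      rw [abs_mul]
      refine mul_le_mul (hfbd y) ?_ (abs_nonneg _) hA0
      calc |F (g x) - F (g y)| ≤ M * |g x - g y| := hFlip _ _
        _ ≤ M * (HK * I * ‖x - y‖ ^ γ) :=
            mul_le_mul_of_nonneg_left (hgdiff x y) hM0
    calc |φ x - φ y| ≤ |(f x - f y) * F (g x)| + |f y * (F (g x) - F (g y))| := by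
          rw [key]; exact abs_add_le _ _
      _ ≤ Hf * ‖x - y‖ ^ γ * B + A * (M * (HK * I * ‖x - y‖ ^ γ)) := add_le_add e1 e2
      _ = H * ‖x - y‖ ^ γ := by rw [hHdef]; ring
  have hφratio : ∀ p : Euc d × Euc d, |φ p.1 - φ p.2| / ‖p.1 - p.2‖ ^ γ ≤ H := by
    rintro ⟨x, y⟩
    rcases eq_or_ne x y with rfl | hxy
    · simp [hH0]
    · have hpos : (0:ℝ) < ‖x - y‖ ^ γ :=
        Real.rpow_pos_of_pos (norm_pos_iff.mpr (sub_ne_zero.mpr hxy)) γ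
      rw [div_le_iff₀ hpos]
      exact hφdiff x y
  have hbdd1 : BddAbove (Set.range fun x => |φ x|) :=
    ⟨A * B, by rintro _ ⟨x, rfl⟩; exact hφbd x⟩
  have hbdd2 : BddAbove (Set.range fun p : Euc d × Euc d => |φ p.1 - φ p.2| / ‖p.1 - p.2‖ ^ γ) :=
    ⟨H, by rintro _ ⟨p, rfl⟩; exact hφratio p⟩
  refine ⟨⟨hbdd1, hbdd2⟩, ?_, ?_⟩
  · -- integrability of φ
    have : Integrable (fun x => F (g x) * f x) :=
      hfInt.bdd_mul (c := B) (hF.continuous.comp hgc).aestronglyMeasurable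
        (Eventually.of_forall fun x => by simpa [Real.norm_eq_abs] using hFg x)
    exact this.congr (Eventually.of_forall fun x => mul_comm _ _)
  · -- norm estimate
    have hs1 : supN φ ≤ A * B := ciSup_le hφbd
    have hs2 : holdS γ φ ≤ H := ciSup_le hφratio
    have hcn : cNorm γ φ ≤ A * B + H := by
      rw [cNorm]; exact add_le_add hs1 hs2
    have hcnf : cNorm γ f = A + Hf := rfl
    refine le_trans hcn ?_
    rw [hcnf, hB, hHdef, hC0]
    nlinarith [mul_nonneg hA0 hI0, mul_nonneg hHf0 hI0, mul_nonneg hM0 hSK0,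
      mul_nonneg hM0 hHK0, mul_nonneg (mul_nonneg hM0 hSK0) hI0,
      mul_nonneg (mul_nonneg hM0 hHK0) hI0, abs_nonneg (F 0),
      mul_nonneg (add_nonneg hA0 hHf0) hI0,
      mul_nonneg (mul_nonneg hHf0 hM0) (mul_nonneg hSK0 hI0),
      mul_nonneg (mul_nonneg hA0 hM0) (mul_nonneg hHK0 hI0),
      mul_nonneg (mul_nonneg hA0 hM0) hSK0,
      mul_nonneg (mul_nonneg hHf0 hM0) hHK0,
      mul_nonneg hA0 (abs_nonneg (F 0)),
      mul_nonneg hHf0 (abs_nonneg (F 0)),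
      mul_nonneg (mul_nonneg hA0 (abs_nonneg (F 0))) hI0,
      mul_nonneg (mul_nonneg hHf0 (abs_nonneg (F 0))) hI0]
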